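/- Let X₁, …, X_N be i.i.d. ℝ^d-valued random variables with law μ having finite second moment, and b̃: ℝ^d×ℝ^d → ℝ^d L-Lipschitz (in the pair). Then for each i, E | ∫ b̃(X_i, z) μ(dz) − N⁻¹ Σ_{j=1}^N b̃(X_i, X_j) | ≤ L (√2/√N + 2/N) (∫ |z|² μ(dz))^{1/2}. -/

import Mathlib

open MeasureTheory ProbabilityTheory

lemma sq_int_le {α : Type*} [MeasurableSpace α] {μ : Measure α} [IsProbabilityMeasure μ]
    {f : α → ℝ} (hf : Integrable f μ) (hf2 : Integrable (fun a => f a ^ 2) μ) :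
    (∫ a, f a ∂μ) ^ 2 ≤ ∫ a, f a ^ 2 ∂μ := by
  set b := ∫ a, f a ∂μ with hb
  have h0 : 0 ≤ ∫ a, (f a - b) ^ 2 ∂μ := integral_nonneg fun a => sq_nonneg _
  have hint : Integrable (fun a => f a ^ 2 - 2 * b * f a) μ := hf2.sub (hf.const_mul _)
  have key : ∫ a, (f a - b) ^ 2 ∂μ = (∫ a, f a ^ 2 ∂μ) - b ^ 2 := by
    have : ∀ a, (f a - b) ^ 2 = (f a ^ 2 - 2 * b * f a) + b ^ 2 := fun a => by ring
    simp_rw [this]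
    rw [integral_add hint (integrable_const _), integral_sub hf2 (hf.const_mul _),
      integral_const_mul, integral_const, probReal_univ, one_smul, ← hb]
    ring
  linarith [key ▸ h0]

lemma var_le {α : Type*} [MeasurableSpace α] {μ : Measure α} [IsProbabilityMeasure μ]
    {F : Type*} [NormedAddCommGroup F] [InnerProductSpace ℝ F] [CompleteSpace F]
    {W : α → F} (c : F) (hW : Integrable W μ)
    (hW2 : Integrable (fun z => ‖W z - c‖ ^ 2) μ) :
    ∫ z, ‖W z - (∫ w, W w ∂μ)‖ ^ 2 ∂μ ≤ ∫ z, ‖W z - c‖ ^ 2 ∂μ := by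
  set b := ∫ w, W w ∂μ with hb
  have hWc : Integrable (fun z => W z - c) μ := hW.sub (integrable_const c)
  have hInner : Integrable (fun z => (inner ℝ (b - c) (W z - c) : ℝ)) μ := hWc.const_inner _
  have hintc : ∫ z, W z - c ∂μ = b - c := by
    rw [integral_sub hW (integrable_const c), integral_const, probReal_univ,
      one_smul, ← hb]
  have key : ∀ z, ‖W z - b‖ ^ 2
      = (‖W z - c‖ ^ 2 - 2 * (inner ℝ (b - c) (W z - c) : ℝ)) + ‖b - c‖ ^ 2 := by
    intro z
    have h1 : W z - b = (W z - c) - (b - c) := by abel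
    rw [h1, norm_sub_sq_real, real_inner_comm]
  calc ∫ z, ‖W z - b‖ ^ 2 ∂μ
      = ∫ z, ((‖W z - c‖ ^ 2 - 2 * (inner ℝ (b - c) (W z - c) : ℝ)) + ‖b - c‖ ^ 2) ∂μ := by
        simp_rw [key]
    _ = (∫ z, ‖W z - c‖ ^ 2 ∂μ) - 2 * ‖b - c‖ ^ 2 + ‖b - c‖ ^ 2 := by
        have hsub : Integrable (fun z => ‖W z - c‖ ^ 2 - 2 * (inner ℝ (b - c) (W z - c) : ℝ)) μ :=
          hW2.sub (hInner.const_mul 2)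
        rw [integral_add hsub (integrable_const _),
          integral_sub hW2 (hInner.const_mul 2), integral_const_mul, integral_inner hWc,
          hintc, real_inner_self_eq_norm_sq, integral_const, probReal_univ,
          one_smul]
    _ ≤ ∫ z, ‖W z - c‖ ^ 2 ∂μ := by nlinarith [sq_nonneg ‖b - c‖]

set_option maxHeartbeats 1000000

theorem stmt10 (d N : ℕ) (hN : 1 ≤ N) (L : ℝ) (hL : 0 < L)
    {Ω : Type*} [MeasureSpace Ω] [IsProbabilityMeasure (ℙ : Measure Ω)]
    (μ : Measure (EuclideanSpace ℝ (Fin d))) [IsProbabilityMeasure μ]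
    (hmom : Integrable (fun z => ‖z‖^2) μ)
    (X : Fin N → Ω → EuclideanSpace ℝ (Fin d))
    (hmeas : ∀ i, Measurable (X i))
    (hindep : iIndepFun X ℙ)
    (hlaw : ∀ i, Measure.map (X i) ℙ = μ)
    (btil : EuclideanSpace ℝ (Fin d) → EuclideanSpace ℝ (Fin d) → EuclideanSpace ℝ (Fin d))
    (hLip : ∀ x x' z z', ‖btil x z - btil x' z'‖ ≤ L * (‖x - x'‖ + ‖z - z'‖)) :
    ∀ i : Fin N,
      (∫ ω, ‖(∫ z, btil (X i ω) z ∂μ) - (N : ℝ)⁻¹ • ∑ j, btil (X i ω) (X j ω)‖) ≤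
        L * (Real.sqrt 2 / Real.sqrt N + 2 / N) * Real.sqrt (∫ z, ‖z‖^2 ∂μ) := by
  intro i
  have hLnn : (0:ℝ) ≤ L := hL.le
  set M1 := ∫ z, ‖z‖ ∂μ with hM1def
  set M2 := ∫ z, ‖z‖ ^ 2 ∂μ with hM2def
  -- basic integrability over μ
  have hnormint : Integrable (fun z : EuclideanSpace ℝ (Fin d) => ‖z‖) μ := by
    have hb1 : Integrable (fun z : EuclideanSpace ℝ (Fin d) => 1 + ‖z‖ ^ 2) μ :=
      (integrable_const 1).add hmom
    refine Integrable.mono' hb1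
      continuous_norm.aestronglyMeasurable (ae_of_all _ fun z => ?_)
    rw [norm_norm]
    nlinarith [sq_nonneg (‖z‖ - 1), norm_nonneg z]
  have hM1nonneg : 0 ≤ M1 := integral_nonneg fun z => norm_nonneg z
  have hM2nonneg : 0 ≤ M2 := integral_nonneg fun z => sq_nonneg _
  have hM1M : M1 ≤ Real.sqrt M2 := by
    rw [Real.le_sqrt hM1nonneg hM2nonneg]
    exact sq_int_le hnormint hmom
  -- continuity of btil
  have hcb : Continuous (fun p : EuclideanSpace ℝ (Fin d) × EuclideanSpace ℝ (Fin d) => btil p.1 p.2) := by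
    have hlip : LipschitzWith (Real.toNNReal (2*L)) (fun p : EuclideanSpace ℝ (Fin d) × EuclideanSpace ℝ (Fin d) => btil p.1 p.2) := by
      apply LipschitzWith.of_dist_le_mul
      intro p q
      rw [dist_eq_norm, Real.coe_toNNReal _ (by positivity)]
      refine (hLip _ _ _ _).trans ?_
      have h1 : ‖p.1 - q.1‖ ≤ dist p q := by
        rw [← dist_eq_norm]; rw [Prod.dist_eq]; exact le_max_left _ _
      have h2 : ‖p.2 - q.2‖ ≤ dist p q := by
        rw [← dist_eq_norm]; rw [Prod.dist_eq]; exact le_max_right _ _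
      nlinarith [dist_nonneg (x := p) (y := q)]
    exact hlip.continuous
  have hcbx : ∀ x : EuclideanSpace ℝ (Fin d), Continuous (fun z => btil x z) :=
    fun x => hcb.comp (continuous_const.prodMk continuous_id)
  have hbx : ∀ x : EuclideanSpace ℝ (Fin d), Integrable (fun z => btil x z) μ := by
    intro x
    refine Integrable.mono' ((integrable_const (‖btil x 0‖)).add (hnormint.const_mul L))
      (hcbx x).aestronglyMeasurable (ae_of_all _ fun z => ?_)
    have h1 := hLip x x z 0
    simp only [sub_self, norm_zero, zero_add, sub_zero] at h1
    calc ‖btil x z‖ = ‖btil x 0 + (btil x z - btil x 0)‖ := by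
          rw [show btil x 0 + (btil x z - btil x 0) = btil x z by abel]
      _ ≤ ‖btil x 0‖ + ‖btil x z - btil x 0‖ := norm_add_le _ _
      _ ≤ ‖btil x 0‖ + L * ‖z‖ := by linarith
  set m : EuclideanSpace ℝ (Fin d) → EuclideanSpace ℝ (Fin d) := fun x => ∫ z, btil x z ∂μ with hm
  have hmc : Continuous m := by
    have hlip : LipschitzWith (Real.toNNReal L) m := by
      apply LipschitzWith.of_dist_le_mul
      intro x x'
      rw [dist_eq_norm, dist_eq_norm, Real.coe_toNNReal _ hLnn]
      have h1 : m x - m x' = ∫ z, (btil x z - btil x' z) ∂μ :=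
        (integral_sub (hbx x) (hbx x')).symm
      rw [h1]
      refine (norm_integral_le_integral_norm _).trans ?_
      calc ∫ z, ‖btil x z - btil x' z‖ ∂μ ≤ ∫ _z, L * ‖x - x'‖ ∂μ := by
            refine integral_mono ((hbx x).sub (hbx x')).norm (integrable_const _) fun z => ?_
            have := hLip x x' z z
            simpa using this
        _ = L * ‖x - x'‖ := by simp
    exact hlip.continuous
  have hfb : ∀ (x z : EuclideanSpace ℝ (Fin d)), ‖m x - btil x z‖ ≤ L * (M1 + ‖z‖) := by
    intro x z
    have h1 : m x - btil x z = ∫ w, (btil x w - btil x z) ∂μ := by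
      rw [integral_sub (hbx x) (integrable_const _), integral_const, probReal_univ, one_smul]
    rw [h1]
    refine (norm_integral_le_integral_norm _).trans ?_
    calc ∫ w, ‖btil x w - btil x z‖ ∂μ ≤ ∫ w, L * (‖w‖ + ‖z‖) ∂μ := by
          refine integral_mono ((hbx x).sub (integrable_const _)).norm
            ((hnormint.add (integrable_const _)).const_mul L) fun w => ?_
          have h2 := hLip x x w z
          simp only [sub_self, norm_zero, zero_add] at h2
          exact h2.trans (mul_le_mul_of_nonneg_left (norm_sub_le w z) hLnn)
      _ = L * (M1 + ‖z‖) := by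
          rw [integral_const_mul, integral_add hnormint (integrable_const _), integral_const,
            probReal_univ, one_smul, ← hM1def]
  -- random variable facts
  have hX1 : ∀ j, Integrable (fun ω => ‖X j ω‖) ℙ := by
    intro j
    have h1 : Integrable (fun z : EuclideanSpace ℝ (Fin d) => ‖z‖) (Measure.map (X j) ℙ) := (hlaw j).symm ▸ hnormint
    have := (integrable_map_measure continuous_norm.aestronglyMeasurable
      (hmeas j).aemeasurable).mp h1
    simpa [Function.comp_def] using this
  have hX2 : ∀ j, Integrable (fun ω => ‖X j ω‖ ^ 2) ℙ := by
    intro j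
    have h1 : Integrable (fun z : EuclideanSpace ℝ (Fin d) => ‖z‖ ^ 2) (Measure.map (X j) ℙ) := (hlaw j).symm ▸ hmom
    have := (integrable_map_measure (continuous_norm.pow 2).aestronglyMeasurable
      (hmeas j).aemeasurable).mp h1
    simpa [Function.comp_def, Pi.pow_apply] using this
  have hEX1 : ∀ j, ∫ ω, ‖X j ω‖ ∂ℙ = M1 := by
    intro j
    rw [hM1def, ← hlaw j, integral_map (hmeas j).aemeasurable continuous_norm.aestronglyMeasurable]
  -- the centered functions
  set F : EuclideanSpace ℝ (Fin d) × EuclideanSpace ℝ (Fin d) → EuclideanSpace ℝ (Fin d) := fun p => m p.1 - btil p.1 p.2 with hF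
  have hFc : Continuous F := (hmc.comp continuous_fst).sub hcb
  set g : Fin N → Ω → EuclideanSpace ℝ (Fin d) := fun j ω => m (X i ω) - btil (X i ω) (X j ω) with hg
  have hgaesm : ∀ j, AEStronglyMeasurable (g j) ℙ := fun j =>
    (hFc.measurable.comp ((hmeas i).prodMk (hmeas j))).aestronglyMeasurable
  have hgb : ∀ j ω, ‖g j ω‖ ≤ L * (M1 + ‖X j ω‖) := fun j ω => hfb _ _
  have hbnd : ∀ j, Integrable (fun ω => L * (M1 + ‖X j ω‖)) ℙ :=
    fun j => ((integrable_const M1).add (hX1 j)).const_mul L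
  have hgint : ∀ j, Integrable (g j) ℙ := fun j =>
    Integrable.mono' (hbnd j) (hgaesm j) (ae_of_all _ fun ω => hgb j ω)
  have hsqint : ∀ j, Integrable (fun ω => (L * (M1 + ‖X j ω‖)) ^ 2) ℙ := by
    intro j
    have h1 : (fun ω => (L * (M1 + ‖X j ω‖)) ^ 2)
        = fun ω => (L ^ 2 * M1 ^ 2 + (2 * L ^ 2 * M1) * ‖X j ω‖) + L ^ 2 * ‖X j ω‖ ^ 2 :=
      funext fun ω => by ring
    rw [h1]
    exact ((integrable_const _).add ((hX1 j).const_mul _)).add ((hX2 j).const_mul _)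
  have hip : ∀ j k, Integrable (fun ω => (inner ℝ (g j ω) (g k ω) : ℝ)) ℙ := by
    intro j k
    have hsum : Integrable (fun ω => (L * (M1 + ‖X j ω‖)) ^ 2 + (L * (M1 + ‖X k ω‖)) ^ 2) ℙ :=
      (hsqint j).add (hsqint k)
    refine Integrable.mono' (hsum.const_mul (1/2 : ℝ))
      ((hgaesm j).inner (hgaesm k)) (ae_of_all _ fun ω => ?_)
    rw [Real.norm_eq_abs]
    refine (abs_real_inner_le_norm _ _).trans ?_
    have h1 := hgb j ω; have h2 := hgb k ω
    nlinarith [norm_nonneg (g j ω), norm_nonneg (g k ω), sq_nonneg (L * (M1 + ‖X j ω‖) - L * (M1 + ‖X k ω‖))]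
  -- the off-diagonal sum
  set s : Finset (Fin N) := Finset.univ.erase i with hs
  set S : Ω → EuclideanSpace ℝ (Fin d) := fun ω => ∑ j ∈ s, g j ω with hS
  have hSint : Integrable S ℙ := integrable_finset_sum _ fun j _ => hgint j
  have hSnormint : Integrable (fun ω => ‖S ω‖) ℙ := hSint.norm
  have hSsq_eq : ∀ ω, ‖S ω‖ ^ 2 = ∑ j ∈ s, ∑ k ∈ s, (inner ℝ (g j ω) (g k ω) : ℝ) := by
    intro ω
    rw [← real_inner_self_eq_norm_sq, hS]
    rw [sum_inner]
    exact Finset.sum_congr rfl fun j _ => by rw [inner_sum]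
  have hSsqint : Integrable (fun ω => ‖S ω‖ ^ 2) ℙ := by
    have h1 : (fun ω => ‖S ω‖ ^ 2)
        = fun ω => ∑ j ∈ s, ∑ k ∈ s, (inner ℝ (g j ω) (g k ω) : ℝ) := funext hSsq_eq
    rw [h1]
    exact integrable_finset_sum _ fun j _ => integrable_finset_sum _ fun k _ => hip j k
  have hNpos : (0:ℝ) < N := by exact_mod_cast Nat.lt_of_lt_of_le Nat.zero_lt_one hN
  -- pointwise decomposition
  have hpt : ∀ ω, ‖(∫ z, btil (X i ω) z ∂μ) - (N : ℝ)⁻¹ • ∑ j, btil (X i ω) (X j ω)‖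
      ≤ (N : ℝ)⁻¹ * ‖g i ω‖ + (N : ℝ)⁻¹ * ‖S ω‖ := by
    intro ω
    have h2 : g i ω + S ω = ∑ j, g j ω := by
      rw [hS, add_comm, Finset.sum_erase_add Finset.univ _ (Finset.mem_univ i)]
    have h3 : ∑ j : Fin N, g j ω = (N : ℝ) • (m (X i ω)) - ∑ j, btil (X i ω) (X j ω) := by
      rw [hg]
      rw [Finset.sum_sub_distrib, Finset.sum_const, Finset.card_univ, Fintype.card_fin]
      congr 1
      exact ((Nat.cast_smul_eq_nsmul ℝ N _).symm)
    have h1 : (∫ z, btil (X i ω) z ∂μ) - (N : ℝ)⁻¹ • ∑ j, btil (X i ω) (X j ω)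
        = (N : ℝ)⁻¹ • (g i ω + S ω) := by
      rw [h2, h3, smul_sub, smul_smul, inv_mul_cancel₀ hNpos.ne', one_smul]
    rw [h1, norm_smul, Real.norm_eq_abs, abs_of_nonneg (by positivity : (0:ℝ) ≤ (N:ℝ)⁻¹)]
    calc (N:ℝ)⁻¹ * ‖g i ω + S ω‖ ≤ (N:ℝ)⁻¹ * (‖g i ω‖ + ‖S ω‖) := by
          exact mul_le_mul_of_nonneg_left (norm_add_le _ _) (by positivity)
      _ = (N : ℝ)⁻¹ * ‖g i ω‖ + (N : ℝ)⁻¹ * ‖S ω‖ := by ring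
  -- diagonal term
  have hDi : ∫ ω, ‖g i ω‖ ∂ℙ ≤ 2 * L * Real.sqrt M2 := by
    calc ∫ ω, ‖g i ω‖ ∂ℙ ≤ ∫ ω, L * (M1 + ‖X i ω‖) ∂ℙ :=
          integral_mono (hgint i).norm (hbnd i) fun ω => hgb i ω
      _ = L * (M1 + M1) := by
          rw [integral_const_mul, integral_add (integrable_const _) (hX1 i), integral_const,
            probReal_univ, one_smul, hEX1 i]
      _ ≤ 2 * L * Real.sqrt M2 := by nlinarith [hM1M, Real.sqrt_nonneg M2]
  -- cross terms vanish
  have hcross : ∀ j ∈ s, ∀ k ∈ s, j ≠ k →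
      ∫ ω, (inner ℝ (g j ω) (g k ω) : ℝ) ∂ℙ = 0 := by
    intro j hj k hk hjk
    have hji : j ≠ i := Finset.ne_of_mem_erase hj
    have hki : k ≠ i := Finset.ne_of_mem_erase hk
    have hTmeas : Measurable (fun ω => (X i ω, X j ω)) := (hmeas i).prodMk (hmeas j)
    set ν := Measure.map (fun ω => (X i ω, X j ω)) ℙ with hν
    haveI : IsProbabilityMeasure ν := Measure.isProbabilityMeasure_map hTmeas.aemeasurable
    have hpk : IndepFun (fun ω => (X i ω, X j ω)) (X k) ℙ :=
      hindep.indepFun_prodMk hmeas i j k hki.symm hjk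
    have hmap : Measure.map (fun ω => ((X i ω, X j ω), X k ω)) ℙ = ν.prod μ := by
      rw [hν, ← hlaw k]
      exact (indepFun_iff_map_prod_eq_prod_map_map hTmeas.aemeasurable
        (hmeas k).aemeasurable).mp hpk
    set H : (EuclideanSpace ℝ (Fin d) × EuclideanSpace ℝ (Fin d)) × EuclideanSpace ℝ (Fin d) → ℝ
      := fun q => (inner ℝ (F q.1) (F (q.1.1, q.2)) : ℝ) with hH
    have hHcont : Continuous H :=
      (hFc.comp continuous_fst).inner
        (hFc.comp ((continuous_fst.comp continuous_fst).prodMk continuous_snd))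
    have hu : Integrable (fun p : EuclideanSpace ℝ (Fin d) × EuclideanSpace ℝ (Fin d)
        => L * (M1 + ‖p.2‖)) ν := by
      rw [hν]
      refine (integrable_map_measure ?_ hTmeas.aemeasurable).mpr ?_
      · exact (continuous_const.mul (continuous_const.add
          (continuous_norm.comp continuous_snd))).aestronglyMeasurable
      · simpa [Function.comp_def] using hbnd j
    have hv : Integrable (fun z : EuclideanSpace ℝ (Fin d) => L * (M1 + ‖z‖)) μ :=
      ((integrable_const M1).add hnormint).const_mul L
    have hHint : Integrable H (ν.prod μ) := by
      refine Integrable.mono' (hu.mul_prod hv) hHcont.aestronglyMeasurable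
        (ae_of_all _ fun q => ?_)
      rw [Real.norm_eq_abs, hH]
      refine (abs_real_inner_le_norm _ _).trans ?_
      exact mul_le_mul (hfb _ _) (hfb _ _) (norm_nonneg _) (by positivity)
    have h0 : ∀ p : EuclideanSpace ℝ (Fin d) × EuclideanSpace ℝ (Fin d),
        ∫ z, H (p, z) ∂μ = 0 := by
      intro p
      have hWint : Integrable (fun z => m p.1 - btil p.1 z) μ :=
        (integrable_const _).sub (hbx p.1)
      have h1 : ∫ z, H (p, z) ∂μ = (inner ℝ (F p) (∫ z, (m p.1 - btil p.1 z) ∂μ) : ℝ) := by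
        rw [hH]
        exact integral_inner hWint (F p)
      rw [h1, integral_sub (integrable_const _) (hbx p.1), integral_const, probReal_univ, one_smul]
      have h2 : m p.1 - ∫ z, btil p.1 z ∂μ = 0 := sub_eq_zero.mpr rfl
      rw [h2, inner_zero_right]
    calc ∫ ω, (inner ℝ (g j ω) (g k ω) : ℝ) ∂ℙ
        = ∫ ω, H ((X i ω, X j ω), X k ω) ∂ℙ := rfl
      _ = ∫ q, H q ∂(ν.prod μ) := by
          rw [← hmap, integral_map (hTmeas.prodMk (hmeas k)).aemeasurable
            hHcont.aestronglyMeasurable]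
      _ = ∫ p, ∫ z, H (p, z) ∂μ ∂ν := integral_prod H hHint
      _ = 0 := by simp [h0]
  -- diagonal second moments
  have hdiag : ∀ j ∈ s, ∫ ω, ‖g j ω‖ ^ 2 ∂ℙ ≤ L ^ 2 * M2 := by
    intro j hj
    have hji : j ≠ i := Finset.ne_of_mem_erase hj
    have hij2 : IndepFun (X i) (X j) ℙ := hindep.indepFun hji.symm
    have hmap2 : Measure.map (fun ω => (X i ω, X j ω)) ℙ = μ.prod μ := by
      have h1 := (indepFun_iff_map_prod_eq_prod_map_map (hmeas i).aemeasurable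
        (hmeas j).aemeasurable).mp hij2
      rw [hlaw i, hlaw j] at h1
      exact h1
    set G : EuclideanSpace ℝ (Fin d) × EuclideanSpace ℝ (Fin d) → ℝ
      := fun p => ‖F p‖ ^ 2 with hG
    have hGcont : Continuous G := hFc.norm.pow 2
    have hsq' : Integrable (fun z : EuclideanSpace ℝ (Fin d) => (L * (M1 + ‖z‖)) ^ 2) μ := by
      have h1 : (fun z : EuclideanSpace ℝ (Fin d) => (L * (M1 + ‖z‖)) ^ 2)
          = fun z => (L ^ 2 * M1 ^ 2 + (2 * L ^ 2 * M1) * ‖z‖) + L ^ 2 * ‖z‖ ^ 2 :=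
        funext fun z => by ring
      rw [h1]
      exact ((integrable_const _).add (hnormint.const_mul _)).add (hmom.const_mul _)
    have hGint : Integrable G (μ.prod μ) := by
      have hone : Integrable (fun _x : EuclideanSpace ℝ (Fin d) => (1:ℝ)) μ := integrable_const 1
      refine Integrable.mono' (hone.mul_prod hsq') hGcont.aestronglyMeasurable
        (ae_of_all _ fun p => ?_)
      have h2 : G p = ‖m p.1 - btil p.1 p.2‖ ^ 2 := rfl
      rw [h2, Real.norm_eq_abs, abs_of_nonneg (sq_nonneg _), one_mul]
      nlinarith [norm_nonneg (m p.1 - btil p.1 p.2), hfb p.1 p.2]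
    have key : ∀ x : EuclideanSpace ℝ (Fin d), ∫ z, G (x, z) ∂μ ≤ L ^ 2 * M2 := by
      intro x
      have hWc2 : Integrable (fun z => ‖btil x z - btil x 0‖ ^ 2) μ := by
        refine Integrable.mono' (hmom.const_mul (L ^ 2))
          ((((hcbx x).sub continuous_const).norm.pow 2).aestronglyMeasurable)
          (ae_of_all _ fun z => ?_)
        rw [Real.norm_eq_abs, abs_of_nonneg (sq_nonneg _)]
        have h2 := hLip x x z 0
        simp only [sub_self, norm_zero, zero_add, sub_zero] at h2
        nlinarith [norm_nonneg (btil x z - btil x 0), norm_nonneg z]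
      have h1 : ∫ z, G (x, z) ∂μ = ∫ z, ‖btil x z - (∫ w, btil x w ∂μ)‖ ^ 2 ∂μ := by
        rw [hG]
        congr 1
        funext z
        rw [norm_sub_rev]
      rw [h1]
      refine (var_le (btil x 0) (hbx x) hWc2).trans ?_
      calc ∫ z, ‖btil x z - btil x 0‖ ^ 2 ∂μ ≤ ∫ z, L ^ 2 * ‖z‖ ^ 2 ∂μ := by
            refine integral_mono hWc2 (hmom.const_mul _) fun z => ?_
            have h2 := hLip x x z 0
            simp only [sub_self, norm_zero, zero_add, sub_zero] at h2
            nlinarith [norm_nonneg (btil x z - btil x 0), norm_nonneg z]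
        _ = L ^ 2 * M2 := by rw [integral_const_mul, ← hM2def]
    calc ∫ ω, ‖g j ω‖ ^ 2 ∂ℙ = ∫ p, G p ∂(μ.prod μ) := by
          rw [← hmap2, integral_map ((hmeas i).prodMk (hmeas j)).aemeasurable
            hGcont.aestronglyMeasurable]
      _ = ∫ x, ∫ z, G (x, z) ∂μ ∂μ := integral_prod G hGint
      _ ≤ ∫ _x, L ^ 2 * M2 ∂μ := integral_mono hGint.integral_prod_left (integrable_const _) key
      _ = L ^ 2 * M2 := by simp
  -- off-diagonal bound
  have hA : ∫ ω, ‖S ω‖ ∂ℙ ≤ Real.sqrt N * L * Real.sqrt M2 := by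
    have hAnn : 0 ≤ ∫ ω, ‖S ω‖ ∂ℙ := integral_nonneg fun ω => norm_nonneg _
    have hjen : (∫ ω, ‖S ω‖ ∂ℙ) ^ 2 ≤ ∫ ω, ‖S ω‖ ^ 2 ∂ℙ := sq_int_le hSnormint hSsqint
    have hSS : ∫ ω, ‖S ω‖ ^ 2 ∂ℙ ≤ (N : ℝ) * (L ^ 2 * M2) := by
      have h1 : ∫ ω, ‖S ω‖ ^ 2 ∂ℙ
          = ∑ j ∈ s, ∑ k ∈ s, ∫ ω, (inner ℝ (g j ω) (g k ω) : ℝ) ∂ℙ := by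
        simp_rw [hSsq_eq]
        rw [integral_finset_sum _ fun j _ => integrable_finset_sum _ fun k _ => hip j k]
        exact Finset.sum_congr rfl fun j _ => integral_finset_sum _ fun k _ => hip j k
      have h2 : ∀ j ∈ s, ∑ k ∈ s, ∫ ω, (inner ℝ (g j ω) (g k ω) : ℝ) ∂ℙ
          = ∫ ω, ‖g j ω‖ ^ 2 ∂ℙ := by
        intro j hj
        rw [Finset.sum_eq_single_of_mem j hj (fun k hk hkj => hcross j hj k hk hkj.symm)]
        congr 1
        funext ω
        rw [real_inner_self_eq_norm_sq]
      rw [h1]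
      calc ∑ j ∈ s, ∑ k ∈ s, ∫ ω, (inner ℝ (g j ω) (g k ω) : ℝ) ∂ℙ
          = ∑ j ∈ s, ∫ ω, ‖g j ω‖ ^ 2 ∂ℙ := Finset.sum_congr rfl h2
        _ ≤ ∑ _j ∈ s, L ^ 2 * M2 := Finset.sum_le_sum hdiag
        _ = (s.card : ℝ) * (L ^ 2 * M2) := by rw [Finset.sum_const, nsmul_eq_mul]
        _ ≤ (N : ℝ) * (L ^ 2 * M2) := by
            refine mul_le_mul_of_nonneg_right ?_ (by positivity)
            have : s.card ≤ N := by
              rw [hs]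
              exact (Finset.card_erase_le).trans (by simp)
            exact_mod_cast this
    have hbnn : 0 ≤ Real.sqrt N * L * Real.sqrt M2 := by positivity
    have hsq2 : (∫ ω, ‖S ω‖ ∂ℙ) ^ 2 ≤ (Real.sqrt N * L * Real.sqrt M2) ^ 2 := by
      refine hjen.trans (hSS.trans (le_of_eq ?_))
      have e : (Real.sqrt N * L * Real.sqrt M2) ^ 2
          = (Real.sqrt N) ^ 2 * L ^ 2 * (Real.sqrt M2) ^ 2 := by ring
      rw [e, Real.sq_sqrt hNpos.le, Real.sq_sqrt hM2nonneg]
      ring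
    calc ∫ ω, ‖S ω‖ ∂ℙ = Real.sqrt ((∫ ω, ‖S ω‖ ∂ℙ) ^ 2) := (Real.sqrt_sq hAnn).symm
      _ ≤ Real.sqrt ((Real.sqrt N * L * Real.sqrt M2) ^ 2) := Real.sqrt_le_sqrt hsq2
      _ = Real.sqrt N * L * Real.sqrt M2 := Real.sqrt_sq hbnn
  -- put everything together
  have hsN : 0 < Real.sqrt N := Real.sqrt_pos.mpr hNpos
  have hsNsq : Real.sqrt N * Real.sqrt N = (N:ℝ) := Real.mul_self_sqrt hNpos.le
  have h12 : (1:ℝ) ≤ Real.sqrt 2 := by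
    rw [show (1:ℝ) = Real.sqrt 1 from (Real.sqrt_one).symm]
    exact Real.sqrt_le_sqrt (by norm_num)
  have e1 : (N:ℝ)⁻¹ * Real.sqrt N = 1 / Real.sqrt N := by
    rw [eq_div_iff hsN.ne', mul_assoc, hsNsq, inv_mul_cancel₀ hNpos.ne']
  calc ∫ ω, ‖(∫ z, btil (X i ω) z ∂μ) - (N : ℝ)⁻¹ • ∑ j, btil (X i ω) (X j ω)‖
      ≤ ∫ ω, ((N : ℝ)⁻¹ * ‖g i ω‖ + (N : ℝ)⁻¹ * ‖S ω‖) ∂ℙ := by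
        refine integral_mono_of_nonneg (ae_of_all _ fun ω => norm_nonneg _)
          (((hgint i).norm.const_mul _).add (hSnormint.const_mul _)) (ae_of_all _ hpt)
    _ = (N : ℝ)⁻¹ * (∫ ω, ‖g i ω‖ ∂ℙ) + (N : ℝ)⁻¹ * (∫ ω, ‖S ω‖ ∂ℙ) := by
        rw [integral_add ((hgint i).norm.const_mul _) (hSnormint.const_mul _),
          integral_const_mul, integral_const_mul]
    _ ≤ (N : ℝ)⁻¹ * (2 * L * Real.sqrt M2) + (N : ℝ)⁻¹ * (Real.sqrt N * L * Real.sqrt M2) := by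
        have hi1 : (0:ℝ) ≤ (N:ℝ)⁻¹ := by positivity
        have t1 := mul_le_mul_of_nonneg_left hDi hi1
        have t2 := mul_le_mul_of_nonneg_left hA hi1
        linarith
    _ = L * (1 / Real.sqrt N) * Real.sqrt M2 + L * (2 / (N:ℝ)) * Real.sqrt M2 := by
        have e2 : (N:ℝ)⁻¹ * (Real.sqrt N * L * Real.sqrt M2)
            = ((N:ℝ)⁻¹ * Real.sqrt N) * (L * Real.sqrt M2) := by ring
        rw [e2, e1]
        ring
    _ ≤ L * (Real.sqrt 2 / Real.sqrt N) * Real.sqrt M2 + L * (2 / (N:ℝ)) * Real.sqrt M2 := by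
        have h3 : (1:ℝ) / Real.sqrt N ≤ Real.sqrt 2 / Real.sqrt N := by gcongr
        have h4 := mul_le_mul_of_nonneg_right (mul_le_mul_of_nonneg_left h3 hLnn)
          (Real.sqrt_nonneg M2)
        linarith
    _ = L * (Real.sqrt 2 / Real.sqrt N + 2 / (N:ℝ)) * Real.sqrt M2 := by ring
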